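/- Let n = 3·2^s with s ≥ 2, ζ = ζ_n a primitive n-th root of unity, and F_n = ℚ(ζ + ζ⁻¹). Then p'_n := 1 + ζ + ζ⁻¹ satisfies N_{F_n/ℚ}(p'_n) = -2 and N_{F_n/ℚ}(p'_n - 2) = -2, and p'_n generates the unique prime ideal of F_n above 2. -/

import Mathlib

open Polynomial IntermediateField


/-- Iterates of `X ↦ X^2 - 2` over `ℤ`. -/
noncomputable def chebAux : ℕ → ℤ[X]
  | 0 => X
  | (k+1) => (chebAux k)^2 - 2

lemma chebAux_monic_natDegree (k : ℕ) :
    (chebAux k).Monic ∧ (chebAux k).natDegree = 2 ^ k := by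
  induction k with
  | zero => exact ⟨monic_X, natDegree_X⟩
  | succ k ih =>
    obtain ⟨hm, hd⟩ := ih
    have hsq : ((chebAux k) ^ 2).Monic := hm.pow 2
    have hdsq : ((chebAux k) ^ 2).natDegree = 2 ^ (k + 1) := by
      rw [natDegree_pow, hd, pow_succ, mul_comm]
    have h2 : chebAux (k+1) = (chebAux k)^2 - C 2 := by
      show (chebAux k)^2 - 2 = _
      norm_num
    constructor
    · rw [h2, sub_eq_add_neg]
      refine hsq.add_of_left ?_
      rw [degree_neg]
      calc (C (2:ℤ)).degree ≤ 0 := degree_C_le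
        _ < ((chebAux k)^2).degree := by
          rw [degree_eq_natDegree hsq.ne_zero, hdsq]
          exact_mod_cast (by positivity : 0 < 2^(k+1))
    · rw [h2, natDegree_sub_C, hdsq]

lemma chebAux_aeval_add_inv (w : ℂ) (hw : w ≠ 0) (k : ℕ) :
    aeval (w + w⁻¹) (chebAux k) = w ^ (2 ^ k) + (w ^ (2 ^ k))⁻¹ := by
  induction k with
  | zero => simp [chebAux]
  | succ k ih =>
    have ha : w ^ (2 ^ k) ≠ 0 := pow_ne_zero _ hw
    have hpow : w ^ (2 ^ (k+1)) = (w ^ (2 ^ k)) ^ 2 := by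
      rw [← pow_mul, pow_succ]
    rw [show chebAux (k+1) = (chebAux k)^2 - 2 from rfl, map_sub, map_pow, ih, hpow,
      show ((aeval (w + w⁻¹)) (2:ℤ[X])) = 2 by rw [map_ofNat]]
    field_simp
    ring

lemma chebAux_rep (k : ℕ) : ∃ u : ℤ[X], chebAux k = X ^ (2 ^ k) + 2 * u := by
  induction k with
  | zero => exact ⟨0, by simp [chebAux]⟩
  | succ k ih =>
    obtain ⟨u, hu⟩ := ih
    refine ⟨2 * X ^ (2 ^ k) * u + 2 * u ^ 2 - 1, ?_⟩
    have h2 : (2:ℕ) ^ (k+1) = 2 ^ k * 2 := pow_succ 2 k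
    rw [show chebAux (k+1) = (chebAux k)^2 - 2 from rfl, hu, h2, pow_mul]
    ring

lemma chebAux_eval_negone (k : ℕ) : (chebAux k).eval (-1) = -1 := by
  induction k with
  | zero => simp [chebAux]
  | succ k ih => rw [show chebAux (k+1) = (chebAux k)^2 - 2 from rfl]; simp [ih]

lemma chebAux_eval_one (k : ℕ) : (chebAux (k+1)).eval 1 = -1 := by
  induction k with
  | zero => simp [chebAux]
  | succ k ih => rw [show chebAux (k+2) = (chebAux (k+1))^2 - 2 from rfl]; simp [ih]

lemma X_sub_one_pow_rep (m : ℕ) :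
    ∃ w : ℤ[X], (X - 1 : ℤ[X]) ^ (2 ^ m) = X ^ (2 ^ m) + 1 + 2 * w := by
  induction m with
  | zero => exact ⟨-1, by ring⟩
  | succ m ih =>
    obtain ⟨w, hw⟩ := ih
    refine ⟨X ^ (2 ^ m) + 2 * (X ^ (2 ^ m) + 1) * w + 2 * w ^ 2, ?_⟩
    have h2 : (2:ℕ) ^ (m+1) = 2 ^ m * 2 := pow_succ 2 m
    rw [h2, pow_mul, pow_mul, hw]
    ring


lemma primSix_add_inv (y : ℂ) (hy : IsPrimitiveRoot y 6) : y + y⁻¹ = 1 := by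
  have hy0 : y ≠ 0 := hy.ne_zero (by norm_num)
  have h6 : y ^ 6 = 1 := hy.pow_eq_one
  have h3 : y ^ 3 = -1 := by
    have hsq : (y ^ 3) ^ 2 = 1 := by rw [← pow_mul]; exact h6
    rcases sq_eq_one_iff.mp hsq with h | h
    · exfalso
      exact (by norm_num : ¬ (6 ∣ 3)) ((hy.pow_eq_one_iff_dvd 3).mp h)
    · exact h
  have hne : y + 1 ≠ 0 := by
    intro h
    have : y ^ 2 = 1 := by
      have : y = -1 := by linear_combination h
      rw [this]; ring
    exact (by norm_num : ¬ (6 ∣ 2)) ((hy.pow_eq_one_iff_dvd 2).mp this)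
  have hquad : y ^ 2 - y + 1 = 0 := by
    have : (y + 1) * (y ^ 2 - y + 1) = 0 := by linear_combination h3
    rcases mul_eq_zero.mp this with h | h
    · exact absurd h hne
    · exact h
  field_simp
  linear_combination hquad

lemma norm_eq_of_natDegree_minpoly {L : Type*} [Field L] [Algebra ℚ L] [FiniteDimensional ℚ L]
    (x : L) (hdeg : (minpoly ℚ x).natDegree = Module.finrank ℚ L) :
    Algebra.norm ℚ x = (-1) ^ Module.finrank ℚ L * (minpoly ℚ x).coeff 0 := by
  have hx : IsIntegral ℚ x := IsIntegral.of_finite ℚ x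
  let pb0 := Algebra.adjoin.powerBasis hx
  have hdim : pb0.dim = (minpoly ℚ x).natDegree := rfl
  have h1 : Module.finrank ℚ (Algebra.adjoin ℚ {x}) = Module.finrank ℚ L := by
    rw [pb0.finrank, hdim, hdeg]
  have htop : Algebra.adjoin ℚ {x} = ⊤ := by
    refine Algebra.toSubmodule_eq_top.mp (Submodule.eq_top_of_finrank_eq ?_)
    rwa [(Algebra.adjoin ℚ {x}).finrank_toSubmodule]
  let e : (Algebra.adjoin ℚ {x}) ≃ₐ[ℚ] L :=
    (Subalgebra.equivOfEq _ _ htop).trans Subalgebra.topEquiv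
  let pb := pb0.map e
  have hgen : pb.gen = x := by
    show e pb0.gen = x
    rw [Algebra.adjoin.powerBasis_gen]
    rfl
  have h := Algebra.PowerBasis.norm_gen_eq_coeff_zero_minpoly pb
  rw [hgen] at h
  rw [h]
  congr 1
  have : pb.dim = pb0.dim := rfl
  rw [this, hdim, hdeg]


set_option maxHeartbeats 1000000
set_option synthInstance.maxHeartbeats 400000
/-- For `n = 3·2^s`, `s ≥ 2`: `p'_n = 1 + ζ + ζ⁻¹` satisfies
`N_{F/ℚ}(p'_n) = -2`, `N_{F/ℚ}(p'_n - 2) = -2`, and `p'_n` generates the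
unique prime of `F = ℚ(ζ + ζ⁻¹)` above `2`. -/
theorem one_add_zeta_generates_prime_above_two (s : ℕ) (hs : 2 ≤ s) (n : ℕ)
    (hn : n = 3 * 2 ^ s) (ζ : ℂ) (hζ : IsPrimitiveRoot ζ n)
    (F : IntermediateField ℚ ℂ) (hF : F = IntermediateField.adjoin ℚ {ζ + ζ⁻¹})
    [FiniteDimensional ℚ ↥F]
    (p : ↥F) (hp : (p : ℂ) = 1 + ζ + ζ⁻¹) :
    Algebra.norm ℚ p = -2 ∧
    Algebra.norm ℚ (p - 2) = -2 ∧
    ∃ pO : NumberField.RingOfIntegers ↥F, (pO : ↥F) = p ∧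
      (Ideal.span {pO}).IsPrime ∧
      ∀ P : Ideal (NumberField.RingOfIntegers ↥F), P.IsPrime → P ≠ ⊥ →
        (2 : NumberField.RingOfIntegers ↥F) ∈ P → P = Ideal.span {pO} := by
  rename_i fdInst
  subst hF
  rw [show (1:ℂ) + ζ + ζ⁻¹ = 1 + (ζ + ζ⁻¹) from by ring] at hp
  revert fdInst p hp
  generalize hθgen : (ζ + ζ⁻¹ : ℂ) = θ
  intro fdInst p hp
  have hθdef : θ = ζ + ζ⁻¹ := hθgen.symm
  have hn0 : n ≠ 0 := by rw [hn]; positivity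
  have hnpos : 0 < n := Nat.pos_of_ne_zero hn0
  have hζ0 : ζ ≠ 0 := hζ.ne_zero hn0
  set d : ℕ := 2 ^ (s-1) with hd
  have hs1 : s - 1 + 1 = s := by omega
  -- the element ζ^(2^(s-1)) is a primitive 6th root of unity
  have h2pow : (3:ℕ) * 2 ^ s = 2 ^ (s-1) * 6 := by
    conv_lhs => rw [← hs1]
    ring
  have hy6 : IsPrimitiveRoot (ζ ^ (2 ^ (s-1))) 6 := by
    refine hζ.pow hnpos ?_
    rw [hn, h2pow]
  have hsum : ζ ^ (2 ^ (s-1)) + (ζ ^ (2 ^ (s-1)))⁻¹ = 1 := primSix_add_inv _ hy6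
  -- the integral polynomial g with g(θ) = 0
  set gZ : ℤ[X] := chebAux (s-1) - C 1 with hgZ
  obtain ⟨hfm, hfd⟩ := chebAux_monic_natDegree (s-1)
  have hgZdeg : gZ.natDegree = d := by rw [hgZ, natDegree_sub_C, hfd]
  have hdpos : 0 < d := by positivity
  have hgZmonic : gZ.Monic := by
    rw [hgZ, sub_eq_add_neg]
    refine hfm.add_of_left ?_
    rw [degree_neg]
    calc (C (1:ℤ)).degree ≤ 0 := degree_C_le
      _ < (chebAux (s-1)).degree := by
        rw [degree_eq_natDegree hfm.ne_zero, hfd]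
        exact_mod_cast (by positivity : 0 < 2 ^ (s-1))
  have hgθ : aeval θ gZ = 0 := by
    rw [hgZ, map_sub, hθdef, chebAux_aeval_add_inv ζ hζ0 (s-1), aeval_C, hsum]
    norm_num
  set gQ : ℚ[X] := gZ.map (algebraMap ℤ ℚ) with hgQ
  have hgQmonic : gQ.Monic := hgZmonic.map _
  have hgQdeg : gQ.natDegree = d := by
    rw [hgQ, natDegree_map_eq_of_injective (algebraMap ℤ ℚ).injective_int, hgZdeg]
  have hgQθ : aeval θ gQ = 0 := by
    rw [hgQ, aeval_map_algebraMap, hgθ]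
  have hθint : IsIntegral ℚ θ := ⟨gQ, hgQmonic, hgQθ⟩
  -- degree of E = ℚ(ζ)
  have hζint : IsIntegral ℚ ζ := (hζ.isIntegral hnpos).tower_top
  have hcop : Nat.Coprime 3 (2 ^ s) := Nat.Coprime.pow_right s (by decide)
  have hEdeg : Module.finrank ℚ ℚ⟮ζ⟯ = 2 ^ s := by
    rw [IntermediateField.adjoin.finrank hζint, ← cyclotomic_eq_minpoly_rat hζ hnpos,
      natDegree_cyclotomic, hn, Nat.totient_mul hcop,
      Nat.totient_prime_pow Nat.prime_two (by omega : 0 < s),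
      Nat.totient_prime (by norm_num)]
    conv_rhs => rw [← hs1]
    ring
  -- degree of F over ℚ is at most d
  have hminθ_dvd : minpoly ℚ θ ∣ gQ := minpoly.dvd ℚ θ hgQθ
  have hFdeg_eq : Module.finrank ℚ ℚ⟮θ⟯ = (minpoly ℚ θ).natDegree :=
    IntermediateField.adjoin.finrank hθint
  have hFdeg_le : Module.finrank ℚ ℚ⟮θ⟯ ≤ d := by
    rw [hFdeg_eq, ← hgQdeg]
    exact natDegree_le_of_dvd hminθ_dvd hgQmonic.ne_zero
  -- ζ is quadratic over F
  have hθmem : θ ∈ ℚ⟮θ⟯ := mem_adjoin_simple_self ℚ θ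
  set θF : ℚ⟮θ⟯ := ⟨θ, hθmem⟩ with hθF
  set q2 : Polynomial ℚ⟮θ⟯ := X ^ 2 - C θF * X + C 1 with hq2
  have hq2deg : q2.natDegree = 2 := by
    rw [hq2]
    compute_degree!
  have hq2ne : q2 ≠ 0 := fun h => by simp [h] at hq2deg
  have hq2ζ : aeval ζ q2 = 0 := by
    rw [hq2]
    simp only [map_add, map_sub, map_pow, map_mul, aeval_X, aeval_C]
    have hC : (algebraMap ℚ⟮θ⟯ ℂ) θF = θ := rfl
    have hC1 : (algebraMap ℚ⟮θ⟯ ℂ) 1 = 1 := map_one _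
    rw [hC, hC1, hθdef]
    field_simp
    ring
  have hζintF : IsIntegral ℚ⟮θ⟯ ζ := by
    refine ⟨q2, ?_, hq2ζ⟩
    rw [hq2]
    have : (X ^ 2 - C θF * X + C 1 : Polynomial ℚ⟮θ⟯)
        = X ^ 2 + (C (-θF) * X + C 1) := by rw [map_neg]; ring
    rw [this]
    refine (monic_X_pow 2).add_of_left ?_
    refine lt_of_le_of_lt (degree_add_le _ _) ?_
    rw [degree_X_pow]
    refine max_lt ?_ ?_
    · exact lt_of_le_of_lt (degree_mul_le _ _)
        (by
          have h1 : (C (-θF)).degree ≤ 0 := degree_C_le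
          have h2 : (X : Polynomial ℚ⟮θ⟯).degree = 1 := degree_X
          calc (C (-θF)).degree + (X : Polynomial ℚ⟮θ⟯).degree ≤ 0 + 1 := by
                exact add_le_add h1 (le_of_eq h2)
            _ < 2 := by norm_num)
    · exact lt_of_le_of_lt degree_C_le (by norm_num)
  have htle : Module.finrank ℚ⟮θ⟯ ℚ⟮θ⟯⟮ζ⟯ ≤ 2 := by
    rw [IntermediateField.adjoin.finrank hζintF, ← hq2deg]
    exact natDegree_le_of_dvd (minpoly.dvd _ ζ hq2ζ) hq2ne
  -- tower
  have hζIn : ζ ∈ ℚ⟮ζ⟯ := mem_adjoin_simple_self ℚ ζ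
  have hθIn : θ ∈ ℚ⟮ζ⟯ := by
    rw [hθdef]
    exact add_mem hζIn (inv_mem hζIn)
  have hadj : (ℚ⟮θ⟯⟮ζ⟯).restrictScalars ℚ = ℚ⟮ζ⟯ := by
    rw [show (ℚ⟮θ⟯⟮ζ⟯).restrictScalars ℚ = IntermediateField.adjoin ℚ ({θ} ∪ {ζ}) from
      IntermediateField.adjoin_adjoin_left (F := ℚ) (S := {θ}) {ζ}]
    apply le_antisymm
    · refine IntermediateField.adjoin_le_iff.mpr ?_
      intro x hx
      rcases hx with hx | hx
      · rw [Set.mem_singleton_iff] at hx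
        rw [hx]
        exact hθIn
      · rw [Set.mem_singleton_iff] at hx
        rw [hx]
        exact hζIn
    · exact IntermediateField.adjoin.mono _ _ _ Set.subset_union_right
  have hmul : Module.finrank ℚ ℚ⟮θ⟯ * Module.finrank ℚ⟮θ⟯ ℚ⟮θ⟯⟮ζ⟯ = 2 ^ s := by
    rw [Module.finrank_mul_finrank, ← hEdeg, ← hadj]
    rfl
  -- conclude finrank = d
  have hFdeg : Module.finrank ℚ ℚ⟮θ⟯ = d := by
    have hpow2 : (2:ℕ) ^ s = 2 * d := by
      rw [hd]
      conv_lhs => rw [← hs1]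
      ring
    have h1 : Module.finrank ℚ ℚ⟮θ⟯ * Module.finrank ℚ⟮θ⟯ ℚ⟮θ⟯⟮ζ⟯ = 2 * d := hmul.trans hpow2
    nlinarith [hFdeg_le, htle, h1]
  have hminθ : minpoly ℚ θ = gQ := by
    refine (eq_of_monic_of_dvd_of_natDegree_le (minpoly.monic hθint) hgQmonic hminθ_dvd ?_).symm
    rw [hgQdeg, ← hFdeg, hFdeg_eq]
  -- evaluations of gZ
  have hgZnegone : gZ.eval (-1) = -2 := by
    rw [hgZ, eval_sub, chebAux_eval_negone, eval_C]
    norm_num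
  have hgZone : gZ.eval 1 = -2 := by
    rw [hgZ, eval_sub, show s - 1 = (s - 2) + 1 by omega, chebAux_eval_one, eval_C]
    norm_num
  have hgQeval : ∀ a : ℤ, gQ.eval ((a : ℚ)) = ((gZ.eval a : ℤ) : ℚ) := by
    intro a
    rw [hgQ, show algebraMap ℤ ℚ = Int.castRingHom ℚ from rfl]
    exact_mod_cast eval_intCast_map (Int.castRingHom ℚ) gZ a
  -- minimal polynomial of p
  have hpcoe : (algebraMap ℚ⟮θ⟯ ℂ) p = θ + algebraMap ℚ ℂ 1 := by
    rw [show (algebraMap ℚ⟮θ⟯ ℂ) p = (p : ℂ) from rfl, hp]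
    push_cast
    ring
  have hminp : minpoly ℚ p = gQ.comp (X - C 1) := by
    rw [← minpoly.algebraMap_eq (algebraMap ℚ⟮θ⟯ ℂ).injective p, hpcoe,
      minpoly.add_algebraMap, hminθ]
  have hdcomp1 : (gQ.comp (X - C 1)).natDegree = d := by
    rw [natDegree_comp, hgQdeg, natDegree_X_sub_C, mul_one]
  have hEvenD : Even d := by
    refine ⟨2 ^ (s - 2), ?_⟩
    rw [hd, show s - 1 = (s - 2) + 1 by omega, pow_succ]
    ring
  have hnorm1 : Algebra.norm ℚ p = -2 := by
    rw [norm_eq_of_natDegree_minpoly p (by rw [hminp, hdcomp1, hFdeg])]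
    rw [hFdeg, hminp, hEvenD.neg_one_pow, one_mul, coeff_zero_eq_eval_zero, eval_comp]
    have h0 : (X - C (1:ℚ)).eval 0 = ((-1 : ℤ) : ℚ) := by norm_num
    rw [h0, hgQeval (-1), hgZnegone]
    norm_num
  -- minimal polynomial of p - 2
  have hp2coe : (algebraMap ℚ⟮θ⟯ ℂ) (p - 2) = θ + algebraMap ℚ ℂ (-1) := by
    rw [map_sub, show (algebraMap ℚ⟮θ⟯ ℂ) p = (p : ℂ) from rfl, hp,
      show (algebraMap ℚ⟮θ⟯ ℂ) 2 = 2 from map_ofNat _ 2]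
    push_cast
    ring
  have hminp2 : minpoly ℚ (p - 2) = gQ.comp (X - C (-1)) := by
    rw [← minpoly.algebraMap_eq (algebraMap ℚ⟮θ⟯ ℂ).injective (p - 2), hp2coe,
      minpoly.add_algebraMap, hminθ]
  have hdcomp2 : (gQ.comp (X - C (-1))).natDegree = d := by
    rw [natDegree_comp, hgQdeg, natDegree_X_sub_C, mul_one]
  have hnorm2 : Algebra.norm ℚ (p - 2) = -2 := by
    rw [norm_eq_of_natDegree_minpoly (p - 2) (by rw [hminp2, hdcomp2, hFdeg])]
    rw [hFdeg, hminp2, hEvenD.neg_one_pow, one_mul, coeff_zero_eq_eval_zero, eval_comp]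
    have h0 : (X - C (-1:ℚ)).eval 0 = ((1 : ℤ) : ℚ) := by norm_num
    rw [h0, hgQeval 1, hgZone]
    norm_num
  refine ⟨hnorm1, hnorm2, ?_⟩
  -- ring of integers part
  haveI : NumberField ℚ⟮θ⟯ := ⟨⟩
  set hZ : ℤ[X] := gZ.comp (X - C 1) with hhZ
  have hZmonic : hZ.Monic := by
    rw [hhZ]
    exact hgZmonic.comp_X_sub_C 1
  have haevalC : aeval ((p : ℂ)) hZ = 0 := by
    rw [hhZ, aeval_comp]
    have : (aeval ((p : ℂ))) (X - C 1 : ℤ[X]) = θ := by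
      rw [hp]
      simp
    rw [this, hgθ]
  have haevalp : aeval p hZ = 0 := by
    apply (algebraMap ℚ⟮θ⟯ ℂ).injective
    rw [map_zero, ← aeval_algebraMap_apply]
    exact haevalC
  have hpint : IsIntegral ℤ p := ⟨hZ, hZmonic, haevalp⟩
  set pO : NumberField.RingOfIntegers ℚ⟮θ⟯ := ⟨p, hpint⟩ with hpO
  have hpne : p ≠ 0 := by
    intro h
    rw [h, Algebra.norm_zero] at hnorm1
    norm_num at hnorm1
  have hnormZ : Algebra.norm ℤ pO = -2 := by
    have hc := Algebra.coe_norm_int (K := ℚ⟮θ⟯) pO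
    rw [show ((pO : ℚ⟮θ⟯)) = p from rfl, hnorm1] at hc
    exact_mod_cast hc
  have habs : Ideal.absNorm (Ideal.span {pO}) = 2 := by
    rw [Ideal.absNorm_span_singleton, hnormZ]
    rfl
  have hprime : (Ideal.span {pO}).IsPrime := by
    refine Ideal.isPrime_of_irreducible_absNorm ?_
    rw [habs]
    exact Nat.irreducible_iff_prime.mpr Nat.prime_two.prime
  refine ⟨pO, rfl, hprime, ?_⟩
  -- uniqueness
  obtain ⟨u, hu⟩ := chebAux_rep (s - 1)
  obtain ⟨w, hw⟩ := X_sub_one_pow_rep (s - 1)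
  have hw' : (X - C 1 : ℤ[X]) ^ (2 ^ (s-1)) = X ^ (2 ^ (s-1)) + 1 + 2 * w := by
    rw [C_1]
    exact hw
  have hrep : hZ = X ^ d + 2 * (w + u.comp (X - C 1)) := by
    rw [hhZ, hgZ, hu]
    have h2c : ((2 : ℤ[X])).comp (X - C 1) = 2 := by
      rw [show (2 : ℤ[X]) = C 2 from rfl, C_comp]
    calc (X ^ (2 ^ (s-1)) + 2 * u - C 1).comp (X - C 1)
        = (X - C 1) ^ (2 ^ (s-1)) + 2 * u.comp (X - C 1) - C 1 := by
          rw [sub_comp, add_comp, pow_comp, X_comp, mul_comp, h2c, C_comp]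
      _ = X ^ d + 2 * (w + u.comp (X - C 1)) := by
          rw [hw', hd, C_1]
          ring
  have haevalO : aeval pO hZ = 0 := by
    apply NumberField.RingOfIntegers.coe_injective
    rw [map_zero, ← aeval_algebraMap_apply]
    exact haevalp
  have hkey : pO ^ d = -(2 * aeval pO (w + u.comp (X - C 1))) := by
    have h := haevalO
    rw [hrep] at h
    simp only [map_add, map_pow, map_mul, aeval_X, map_ofNat] at h
    simp only [map_add]
    linear_combination h
  intro P hP hPbot h2P
  have hpow_mem : pO ^ d ∈ P := by
    rw [hkey]
    exact neg_mem (Ideal.mul_mem_right _ _ h2P)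
  have hpOP : pO ∈ P := hP.mem_of_pow_mem d hpow_mem
  have hle : Ideal.span {pO} ≤ P := (Ideal.span_singleton_le_iff_mem P).mpr hpOP
  have hbot : Ideal.span {pO} ≠ ⊥ := by
    rw [Ne, Ideal.span_singleton_eq_bot]
    intro h
    apply hpne
    have : (pO : ℚ⟮θ⟯) = 0 := by rw [h]; rfl
    exact this
  have hmax : (Ideal.span {pO}).IsMaximal := hprime.isMaximal hbot
  exact ((hmax.eq_of_le hP.ne_top hle)).symm
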